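/- Let T, d be positive integers, let (F_t)_{t=0}^T be a filtration, let (a_t)_{t=1}^T be a real-valued process with a_t F_t-measurable and |a_t| ≤ β_t almost surely for fixed constants β_t > 0, and let x_1, …, x_T be i.i.d. ℝ^d-valued random vectors such that x_t is F_t-measurable and independent of F_{t−1}, and such that E‖x‖² = α₂ d and P(| ‖x‖² − α₂ d | ≥ γ) ≤ 2 exp(−min(γ²/(K₂⁴ d), γ/K₂²)) for all γ > 0, where α₂, K₂ > 0. Then there exists a universal constant c > 0 such that for every δ ∈ (0,1), if d ≥ max(16 K₂⁴/α₂², 4 K₂²/α₂) · log(2T/δ), then with probability at least 1 − δ it holds for all t ∈ {1, …, T} that Σ_{j=1}^t a_j² ‖x_j‖² ≥ (α₂ d / 2) · ( Σ_{j=1}^t E[a_j² | F_{j−1}] − c · sqrt( (Σ_{j=1}^t β_j⁴) · log(4T/δ) ) ). -/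

import Mathlib

open MeasureTheory ProbabilityTheory

noncomputable section

/-- Euclidean norm on `Fin n → ℝ`. -/
def euclNorm {n : ℕ} (v : Fin n → ℝ) : ℝ := Real.sqrt (∑ i, v i ^ 2)


lemma aux_sinh_le {x : ℝ} (hx : 0 ≤ x) : Real.sinh x ≤ x * Real.cosh x := by
  have key : MonotoneOn (fun z : ℝ => z * Real.cosh z - Real.sinh z) (Set.Ici 0) := by
    have hder : ∀ y : ℝ, HasDerivAt (fun z : ℝ => z * Real.cosh z - Real.sinh z)
        (y * Real.sinh y) y := by
      intro y
      have h := ((hasDerivAt_id y).fun_mul (Real.hasDerivAt_cosh y)).fun_sub (Real.hasDerivAt_sinh y)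
      exact h.congr_deriv (by simp only [id, one_mul]; ring)
    refine monotoneOn_of_deriv_nonneg (convex_Ici 0) ?_ ?_ ?_
    · exact (Continuous.sub (continuous_id.mul Real.continuous_cosh) Real.continuous_sinh).continuousOn
    · intro y _; exact (hder y).differentiableAt.differentiableWithinAt
    · intro y hy
      rw [interior_Ici, Set.mem_Ioi] at hy
      rw [(hder y).deriv]
      exact mul_nonneg hy.le (by simpa using hy.le)
  have h0 := key (Set.self_mem_Ici) (Set.mem_Ici.2 hx) hx
  simpa using h0

lemma aux_cosh_le (x : ℝ) : Real.cosh x ≤ Real.exp (x ^ 2 / 2) := by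
  wlog hx : 0 ≤ x with H
  · have := H |x| (abs_nonneg x)
    rwa [Real.cosh_abs, sq_abs] at this
  have key : AntitoneOn (fun z : ℝ => Real.cosh z * Real.exp (-(z ^ 2 / 2))) (Set.Ici 0) := by
    have hder : ∀ y : ℝ, HasDerivAt (fun z : ℝ => Real.cosh z * Real.exp (-(z ^ 2 / 2)))
        (Real.sinh y * Real.exp (-(y ^ 2 / 2)) + Real.cosh y * (Real.exp (-(y ^ 2 / 2)) * (-y))) y := by
      intro y
      have h1 : HasDerivAt (fun z : ℝ => -(z ^ 2 / 2)) (-y) y := by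
        have := ((hasDerivAt_pow 2 y).div_const 2).fun_neg
        exact this.congr_deriv (by norm_num)
      exact (Real.hasDerivAt_cosh y).mul h1.exp
    refine antitoneOn_of_deriv_nonpos (convex_Ici 0) ?_ ?_ ?_
    · exact (Real.continuous_cosh.mul (Continuous.rexp (by continuity))).continuousOn
    · intro y _; exact (hder y).differentiableAt.differentiableWithinAt
    · intro y hy
      rw [interior_Ici, Set.mem_Ioi] at hy
      rw [(hder y).deriv]
      have h2 := aux_sinh_le hy.le
      have h3 := Real.exp_pos (-(y ^ 2 / 2))
      nlinarith
  have h0 := key (Set.self_mem_Ici) (Set.mem_Ici.2 hx) hx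
  simp only [Real.cosh_zero, Real.exp_zero] at h0
  have hc : Real.cosh x * Real.exp (-(x ^ 2 / 2)) ≤ 1 := by simpa using h0
  rw [Real.exp_neg] at hc
  have h4 := Real.exp_pos (x ^ 2 / 2)
  calc Real.cosh x = Real.cosh x * (Real.exp (x ^ 2 / 2))⁻¹ * Real.exp (x ^ 2 / 2) := by
        field_simp
    _ ≤ 1 * Real.exp (x ^ 2 / 2) := mul_le_mul_of_nonneg_right hc h4.le
    _ = Real.exp (x ^ 2 / 2) := one_mul _

lemma aux_chord {x b s : ℝ} (hb : 0 < b) (hx : |x| ≤ b) :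
    Real.exp (s * x) ≤ Real.cosh (s * b) + (x / b) * Real.sinh (s * b) := by
  obtain ⟨hx1, hx2⟩ := abs_le.1 hx
  set θ : ℝ := (b - x) / (2 * b) with hθdef
  have hθ0 : 0 ≤ θ := div_nonneg (by linarith) (by linarith)
  have hθ1 : 0 ≤ 1 - θ := by
    rw [hθdef]
    rw [sub_nonneg, div_le_one (by linarith)]
    linarith
  have hsum : θ + (1 - θ) = 1 := by ring
  have hcvx := convexOn_exp.2 (Set.mem_univ (-(s * b))) (Set.mem_univ (s * b)) hθ0 hθ1 hsum
  have harg : θ • (-(s * b)) + (1 - θ) • (s * b) = s * x := by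
    simp only [smul_eq_mul, hθdef]
    field_simp
    ring
  rw [harg] at hcvx
  refine hcvx.trans (le_of_eq ?_)
  simp only [smul_eq_mul, Real.cosh_eq, Real.sinh_eq, Real.exp_neg, hθdef]
  have he := Real.exp_pos (s * b)
  field_simp
  ring

lemma aux_condExp_exp_le {Ω : Type} {m0 : MeasurableSpace Ω} {μ : Measure Ω}
    [IsProbabilityMeasure μ] {G : MeasurableSpace Ω} (hG : G ≤ m0) {D : Ω → ℝ}
    (hDm : AEStronglyMeasurable[m0] D μ) {b : ℝ} (hb : 0 < b)
    (hbd : ∀ᵐ ω ∂μ, |D ω| ≤ b) (hc : μ[D | G] =ᵐ[μ] 0) (s : ℝ) :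
    μ[fun ω => Real.exp (s * D ω) | G] ≤ᵐ[μ] fun _ => Real.exp (s ^ 2 * b ^ 2 / 2) := by
  have hDint : Integrable D μ :=
    (integrable_const b).mono' hDm (by simpa [Real.norm_eq_abs] using hbd)
  have hint1 : Integrable (fun ω => Real.exp (s * D ω)) μ := by
    refine (integrable_const (Real.exp (|s| * b))).mono'
      (Real.continuous_exp.comp_aestronglyMeasurable (hDm.const_mul s)) ?_
    filter_upwards [hbd] with ω hω
    rw [Real.norm_eq_abs, Real.abs_exp]
    apply Real.exp_le_exp.2
    calc s * D ω ≤ |s * D ω| := le_abs_self _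
      _ = |s| * |D ω| := abs_mul _ _
      _ ≤ |s| * b := mul_le_mul_of_nonneg_left hω (abs_nonneg s)
  have hint2 : Integrable (fun ω => Real.cosh (s * b) + (D ω / b) * Real.sinh (s * b)) μ :=
    (integrable_const _).add ((hDint.div_const b).mul_const _)
  have step1 : μ[fun ω => Real.exp (s * D ω) | G]
      ≤ᵐ[μ] μ[fun ω => Real.cosh (s * b) + (D ω / b) * Real.sinh (s * b) | G] := by
    refine condExp_mono hint1 hint2 ?_
    filter_upwards [hbd] with ω hω
    exact aux_chord hb hω
  have step2 : μ[fun ω => Real.cosh (s * b) + (D ω / b) * Real.sinh (s * b) | G]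
      =ᵐ[μ] fun _ => Real.cosh (s * b) := by
    have heq : (fun ω => Real.cosh (s * b) + (D ω / b) * Real.sinh (s * b))
        = (fun _ : Ω => Real.cosh (s * b)) + (Real.sinh (s * b) / b) • D := by
      funext ω
      simp [smul_eq_mul]
      ring
    rw [heq]
    refine (condExp_add (integrable_const _) (hDint.smul _) _).trans ?_
    have h1 : μ[(fun _ : Ω => Real.cosh (s * b)) | G] = fun _ => Real.cosh (s * b) :=
      condExp_const hG _
    have h2 : μ[(Real.sinh (s * b) / b) • D | G] =ᵐ[μ] (Real.sinh (s * b) / b) • μ[D | G] :=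
      condExp_smul _ _ _
    filter_upwards [h2, hc] with ω hω2 hωc
    simp only [Pi.add_apply, h1, Pi.smul_apply, smul_eq_mul] at *
    rw [hω2, hωc]
    simp
  have step3 : Real.cosh (s * b) ≤ Real.exp (s ^ 2 * b ^ 2 / 2) := by
    have := aux_cosh_le (s * b)
    rwa [mul_pow] at this
  calc μ[fun ω => Real.exp (s * D ω) | G]
      ≤ᵐ[μ] μ[fun ω => Real.cosh (s * b) + (D ω / b) * Real.sinh (s * b) | G] := step1
    _ ≤ᵐ[μ] fun _ => Real.exp (s ^ 2 * b ^ 2 / 2) := by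
        filter_upwards [step2] with ω hω
        rw [hω]
        exact step3

lemma aux_azuma_mgf {Ω : Type} {m0 : MeasurableSpace Ω} (μ : Measure Ω)
    [IsProbabilityMeasure μ] (F : ℕ → MeasurableSpace Ω) (hmono : Monotone F)
    (hle : ∀ t, F t ≤ m0) (D : ℕ → Ω → ℝ) (b : ℕ → ℝ) :
    ∀ t : ℕ, (∀ j, 1 ≤ j → j ≤ t → 0 < b j) →
    (∀ j, 1 ≤ j → j ≤ t → StronglyMeasurable[F j] (D j)) →
    (∀ j, 1 ≤ j → j ≤ t → ∀ᵐ ω ∂μ, |D j ω| ≤ b j) →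
    (∀ j, 1 ≤ j → j ≤ t → μ[D j | F (j - 1)] =ᵐ[μ] 0) → ∀ s : ℝ,
    ∫ ω, Real.exp (s * ∑ j ∈ Finset.Icc 1 t, D j ω) ∂μ
      ≤ Real.exp (s ^ 2 * (∑ j ∈ Finset.Icc 1 t, (b j) ^ 2) / 2) := by
  intro t
  induction t with
  | zero =>
    intro _ _ _ _ s
    simp
  | succ t ih =>
    intro hb hmeas hbd hcond s
    have h1t : (1 : ℕ) ≤ t + 1 := Nat.succ_le_succ (Nat.zero_le t)
    -- split the sum
    have hsplit : ∀ ω, (∑ j ∈ Finset.Icc 1 (t + 1), D j ω)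
        = (∑ j ∈ Finset.Icc 1 t, D j ω) + D (t + 1) ω := by
      intro ω; exact Finset.sum_Icc_succ_top h1t _
    have hsplitb : (∑ j ∈ Finset.Icc 1 (t + 1), (b j) ^ 2)
        = (∑ j ∈ Finset.Icc 1 t, (b j) ^ 2) + (b (t + 1)) ^ 2 :=
      Finset.sum_Icc_succ_top h1t _
    set S : Ω → ℝ := fun ω => ∑ j ∈ Finset.Icc 1 t, D j ω with hS
    set B : ℝ := ∑ j ∈ Finset.Icc 1 t, b j with hB
    set f : Ω → ℝ := fun ω => Real.exp (s * S ω) with hf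
    set h : Ω → ℝ := fun ω => Real.exp (s * D (t + 1) ω) with hh
    set K : ℝ := Real.exp (s ^ 2 * (b (t + 1)) ^ 2 / 2) with hK
    -- measurability
    have hSmeas : StronglyMeasurable[F t] S := by
      apply Finset.stronglyMeasurable_fun_sum
      intro j hj
      rw [Finset.mem_Icc] at hj
      exact (hmeas j hj.1 (hj.2.trans t.le_succ)).mono (hmono hj.2)
    have hfmeas : StronglyMeasurable[F t] f := by
      exact (Real.continuous_exp.comp_stronglyMeasurable (hSmeas.const_mul s))
    have hfmeas0 : AEStronglyMeasurable f μ :=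
      (hfmeas.mono (hle t)).aestronglyMeasurable
    have hhmeas0 : AEStronglyMeasurable h μ :=
      ((Real.continuous_exp.comp_stronglyMeasurable
        (((hmeas (t + 1) h1t le_rfl).mono (hle (t + 1))).const_mul s)).aestronglyMeasurable)
    -- bounds
    have hSbd : ∀ᵐ ω ∂μ, |S ω| ≤ B := by
      have : ∀ᵐ ω ∂μ, ∀ j ∈ Finset.Icc 1 t, |D j ω| ≤ b j := by
        rw [Filter.eventually_all_finset]
        intro j hj
        rw [Finset.mem_Icc] at hj
        exact hbd j hj.1 (hj.2.trans t.le_succ)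
      filter_upwards [this] with ω hω
      calc |S ω| ≤ ∑ j ∈ Finset.Icc 1 t, |D j ω| := Finset.abs_sum_le_sum_abs _ _
        _ ≤ B := Finset.sum_le_sum hω
    have hfbd : ∀ᵐ ω ∂μ, ‖f ω‖ ≤ Real.exp (|s| * B) := by
      filter_upwards [hSbd] with ω hω
      rw [Real.norm_eq_abs, Real.abs_exp]
      apply Real.exp_le_exp.2
      calc s * S ω ≤ |s * S ω| := le_abs_self _
        _ = |s| * |S ω| := abs_mul _ _
        _ ≤ |s| * B := mul_le_mul_of_nonneg_left hω (abs_nonneg s)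
    have hhbd : ∀ᵐ ω ∂μ, ‖h ω‖ ≤ Real.exp (|s| * b (t + 1)) := by
      filter_upwards [hbd (t + 1) h1t le_rfl] with ω hω
      rw [Real.norm_eq_abs, Real.abs_exp]
      apply Real.exp_le_exp.2
      calc s * D (t + 1) ω ≤ |s * D (t + 1) ω| := le_abs_self _
        _ = |s| * |D (t + 1) ω| := abs_mul _ _
        _ ≤ |s| * b (t + 1) := mul_le_mul_of_nonneg_left hω (abs_nonneg s)
    -- integrability
    have hfint : Integrable f μ := (integrable_const _).mono' hfmeas0 hfbd
    have hhint : Integrable h μ := (integrable_const _).mono' hhmeas0 hhbd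
    have hfhint : Integrable (f * h) μ := by
      refine (integrable_const (Real.exp (|s| * B) * Real.exp (|s| * b (t + 1)))).mono'
        (hfmeas0.mul hhmeas0) ?_
      filter_upwards [hfbd, hhbd] with ω h1 h2
      rw [Pi.mul_apply, norm_mul]
      exact mul_le_mul h1 h2 (norm_nonneg _) (Real.exp_pos _).le
    -- conditional bound on h
    have hDcond : μ[D (t + 1) | F t] =ᵐ[μ] 0 := by
      have := hcond (t + 1) h1t le_rfl
      simpa using this
    have hcondh : μ[h | F t] ≤ᵐ[μ] fun _ => K :=
      aux_condExp_exp_le (hle t)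
        (((hmeas (t + 1) h1t le_rfl).mono (hle (t + 1))).aestronglyMeasurable)
        (hb (t + 1) h1t le_rfl) (hbd (t + 1) h1t le_rfl) hDcond s
    have hcondh0 : (0 : Ω → ℝ) ≤ᵐ[μ] μ[h | F t] :=
      condExp_nonneg (ae_of_all _ fun ω => (Real.exp_pos _).le)
    have hfnonneg : ∀ ω, 0 ≤ f ω := fun ω => (Real.exp_pos _).le
    -- pull-out
    have hpull : μ[f * h | F t] =ᵐ[μ] f * μ[h | F t] :=
      condExp_mul_of_stronglyMeasurable_left hfmeas hfhint hhint
    -- integrability of f * condExp h and f * K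
    have hcondint : Integrable (μ[h | F t]) μ := integrable_condExp
    have hfcint : Integrable (fun ω => f ω * (μ[h | F t]) ω) μ := by
      refine (integrable_const (Real.exp (|s| * B) * K)).mono'
        (hfmeas0.mul (stronglyMeasurable_condExp.mono (hle t)).aestronglyMeasurable) ?_
      filter_upwards [hfbd, hcondh, hcondh0] with ω h1 h2 h3
      rw [norm_mul]
      refine mul_le_mul h1 ?_ (norm_nonneg _) (Real.exp_pos _).le
      rw [Real.norm_eq_abs, abs_le]
      exact ⟨le_trans (by simp [K]; positivity) h3, h2⟩
    have hfKint : Integrable (fun ω => f ω * K) μ := hfint.mul_const K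
    -- the chain
    have key : ∫ ω, f ω * h ω ∂μ ≤ K * ∫ ω, f ω ∂μ := by
      calc ∫ ω, f ω * h ω ∂μ = ∫ ω, (μ[f * h | F t]) ω ∂μ := (integral_condExp (hle t)).symm
        _ = ∫ ω, f ω * (μ[h | F t]) ω ∂μ := integral_congr_ae hpull
        _ ≤ ∫ ω, f ω * K ∂μ := by
            refine integral_mono_ae hfcint hfKint ?_
            filter_upwards [hcondh] with ω hω
            exact mul_le_mul_of_nonneg_left hω (hfnonneg ω)
        _ = (∫ ω, f ω ∂μ) * K := integral_mul_const K f
        _ = K * ∫ ω, f ω ∂μ := mul_comm _ _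
    have hIH : ∫ ω, f ω ∂μ ≤ Real.exp (s ^ 2 * (∑ j ∈ Finset.Icc 1 t, (b j) ^ 2) / 2) :=
      ih (fun j h1 h2 => hb j h1 (h2.trans t.le_succ))
        (fun j h1 h2 => hmeas j h1 (h2.trans t.le_succ))
        (fun j h1 h2 => hbd j h1 (h2.trans t.le_succ))
        (fun j h1 h2 => hcond j h1 (h2.trans t.le_succ)) s
    calc ∫ ω, Real.exp (s * ∑ j ∈ Finset.Icc 1 (t + 1), D j ω) ∂μ
        = ∫ ω, f ω * h ω ∂μ := by
          congr 1
          funext ω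
          rw [hsplit ω]
          simp only [hf, hh, hS]
          rw [mul_add, Real.exp_add]
      _ ≤ K * ∫ ω, f ω ∂μ := key
      _ ≤ K * Real.exp (s ^ 2 * (∑ j ∈ Finset.Icc 1 t, (b j) ^ 2) / 2) := by
          exact mul_le_mul_of_nonneg_left hIH (Real.exp_pos _).le
      _ = Real.exp (s ^ 2 * (∑ j ∈ Finset.Icc 1 (t + 1), (b j) ^ 2) / 2) := by
          rw [hsplitb, hK, ← Real.exp_add]
          ring_nf

lemma aux_azuma_tail {Ω : Type} {m0 : MeasurableSpace Ω} (μ : Measure Ω)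
    [IsProbabilityMeasure μ] (F : ℕ → MeasurableSpace Ω) (hmono : Monotone F)
    (hle : ∀ t, F t ≤ m0) (D : ℕ → Ω → ℝ) (b : ℕ → ℝ) (t : ℕ) (ht : 1 ≤ t)
    (hb : ∀ j, 1 ≤ j → j ≤ t → 0 < b j)
    (hmeas : ∀ j, 1 ≤ j → j ≤ t → StronglyMeasurable[F j] (D j))
    (hbd : ∀ j, 1 ≤ j → j ≤ t → ∀ᵐ ω ∂μ, |D j ω| ≤ b j)
    (hcond : ∀ j, 1 ≤ j → j ≤ t → μ[D j | F (j - 1)] =ᵐ[μ] 0)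
    (lam : ℝ) (hlam : 0 < lam) :
    μ {ω | lam ≤ ∑ j ∈ Finset.Icc 1 t, D j ω}
      ≤ ENNReal.ofReal (Real.exp (-(lam ^ 2 / (2 * ∑ j ∈ Finset.Icc 1 t, (b j) ^ 2)))) := by
  set V : ℝ := ∑ j ∈ Finset.Icc 1 t, (b j) ^ 2 with hV
  have hVpos : 0 < V := by
    refine Finset.sum_pos (fun j hj => ?_) ?_
    · rw [Finset.mem_Icc] at hj
      exact pow_pos (hb j hj.1 hj.2) 2
    · exact ⟨1, Finset.mem_Icc.2 ⟨le_rfl, ht⟩⟩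
  set s : ℝ := lam / V with hs
  have hs0 : 0 ≤ s := div_nonneg hlam.le hVpos.le
  set X : Ω → ℝ := fun ω => ∑ j ∈ Finset.Icc 1 t, D j ω with hX
  -- integrability of exp (s * X)
  have hXmeas : AEStronglyMeasurable X μ := by
    refine (Finset.stronglyMeasurable_fun_sum _ (fun j hj => ?_)).aestronglyMeasurable
    rw [Finset.mem_Icc] at hj
    exact (hmeas j hj.1 hj.2).mono (hle j)
  have hXbd : ∀ᵐ ω ∂μ, |X ω| ≤ ∑ j ∈ Finset.Icc 1 t, b j := by
    have hall : ∀ᵐ ω ∂μ, ∀ j ∈ Finset.Icc 1 t, |D j ω| ≤ b j := by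
      rw [Filter.eventually_all_finset]
      intro j hj
      rw [Finset.mem_Icc] at hj
      exact hbd j hj.1 hj.2
    filter_upwards [hall] with ω hω
    calc |X ω| ≤ ∑ j ∈ Finset.Icc 1 t, |D j ω| := Finset.abs_sum_le_sum_abs _ _
      _ ≤ _ := Finset.sum_le_sum hω
  have hint : Integrable (fun ω => Real.exp (s * X ω)) μ := by
    refine (integrable_const (Real.exp (|s| * ∑ j ∈ Finset.Icc 1 t, b j))).mono'
      (Real.continuous_exp.comp_aestronglyMeasurable (hXmeas.const_mul s)) ?_
    filter_upwards [hXbd] with ω hω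
    rw [Real.norm_eq_abs, Real.abs_exp]
    apply Real.exp_le_exp.2
    calc s * X ω ≤ |s * X ω| := le_abs_self _
      _ = |s| * |X ω| := abs_mul _ _
      _ ≤ _ := mul_le_mul_of_nonneg_left hω (abs_nonneg s)
  have hcher := measure_ge_le_exp_mul_mgf (X := X) (μ := μ) lam hs0 hint
  have hmgf : mgf X μ s ≤ Real.exp (s ^ 2 * V / 2) :=
    aux_azuma_mgf μ F hmono hle D b t hb hmeas hbd hcond s
  have hfinal : Real.exp (-s * lam) * mgf X μ s ≤ Real.exp (-(lam ^ 2 / (2 * V))) := by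
    calc Real.exp (-s * lam) * mgf X μ s
        ≤ Real.exp (-s * lam) * Real.exp (s ^ 2 * V / 2) :=
          mul_le_mul_of_nonneg_left hmgf (Real.exp_pos _).le
      _ = Real.exp (-s * lam + s ^ 2 * V / 2) := (Real.exp_add _ _).symm
      _ = Real.exp (-(lam ^ 2 / (2 * V))) := by
          congr 1
          rw [hs]
          field_simp
          ring
  have hne : μ {ω | lam ≤ X ω} ≠ ⊤ := measure_ne_top μ _
  calc μ {ω | lam ≤ X ω} = ENNReal.ofReal ((μ {ω | lam ≤ X ω}).toReal) :=
        (ENNReal.ofReal_toReal hne).symm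
    _ ≤ ENNReal.ofReal (Real.exp (-(lam ^ 2 / (2 * V)))) :=
        ENNReal.ofReal_le_ofReal (hcher.trans hfinal)

set_option maxHeartbeats 1000000 in
/-- lower bound on `Σ a_j² ‖x_j‖²` for a bounded adapted process `a`
and i.i.d. inputs `x` with concentrated norms. -/
theorem statement3 :
    ∃ c : ℝ, 0 < c ∧
    ∀ (T d : ℕ), 0 < T → 0 < d →
    ∀ (Ω : Type) (mΩ : MeasurableSpace Ω) (μ : Measure Ω), IsProbabilityMeasure μ →
    ∀ (F : ℕ → MeasurableSpace Ω), Monotone F → (∀ t, F t ≤ mΩ) →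
    ∀ (a : ℕ → Ω → ℝ) (β : ℕ → ℝ) (x : ℕ → Ω → Fin d → ℝ) (α₂ K₂ : ℝ),
    0 < α₂ → 0 < K₂ →
    -- a is adapted and almost surely bounded by the fixed constants β_t > 0
    (∀ t, 1 ≤ t → t ≤ T → 0 < β t) →
    (∀ t, 1 ≤ t → t ≤ T → Measurable[F t] (a t)) →
    (∀ t, 1 ≤ t → t ≤ T → ∀ᵐ ω ∂μ, |a t ω| ≤ β t) →
    -- x_t is F_t-measurable, independent of F_{t-1}, and the x_t are identically distributed
    (∀ t, 1 ≤ t → t ≤ T → Measurable[F t] (x t)) →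
    (∀ t, 1 ≤ t → t ≤ T →
      Indep (MeasurableSpace.comap (x t) inferInstance) (F (t - 1)) μ) →
    (∀ s t, 1 ≤ s → s ≤ T → 1 ≤ t → t ≤ T → IdentDistrib (x s) (x t) μ μ) →
    -- E‖x‖² = α₂ d and concentration of ‖x‖²
    (∀ t, 1 ≤ t → t ≤ T → ∫ ω, euclNorm (x t ω) ^ 2 ∂μ = α₂ * d) →
    (∀ t, 1 ≤ t → t ≤ T → ∀ γ : ℝ, 0 < γ →
      μ {ω | γ ≤ |euclNorm (x t ω) ^ 2 - α₂ * d|}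
        ≤ ENNReal.ofReal (2 * Real.exp (-(min (γ ^ 2 / (K₂ ^ 4 * d)) (γ / K₂ ^ 2))))) →
    ∀ δ : ℝ, 0 < δ → δ < 1 →
    -- dimension condition
    max (16 * K₂ ^ 4 / α₂ ^ 2) (4 * K₂ ^ 2 / α₂) * Real.log (2 * T / δ) ≤ d →
    ENNReal.ofReal (1 - δ) ≤
      μ {ω | ∀ t ∈ Finset.Icc 1 T,
        α₂ * d / 2 *
          ((∑ j ∈ Finset.Icc 1 t, (μ[(fun ω' => (a j ω') ^ 2) | F (j - 1)]) ω)
            - c * Real.sqrt ((∑ j ∈ Finset.Icc 1 t, β j ^ 4) * Real.log (4 * T / δ)))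
        ≤ ∑ j ∈ Finset.Icc 1 t, (a j ω) ^ 2 * euclNorm (x j ω) ^ 2} := by
  refine ⟨Real.sqrt 2, Real.sqrt_pos.2 (by norm_num), ?_⟩
  intro T d hT hd Ω mΩ μ hProb F hFmono hFle a β x α₂ K₂ hα hK hβpos hameas habd hxmeas
    _hindep _hident _hmean hconc δ hδ0 hδ1 hdim
  haveI := hProb
  have hT1 : (1 : ℝ) ≤ T := Nat.one_le_cast.2 hT
  have hdpos : (0 : ℝ) < d := Nat.cast_pos.2 hd
  have h2T : (0 : ℝ) < 2 * T / δ := by positivity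
  have h4T : (0 : ℝ) < 4 * T / δ := by positivity
  set L : ℝ := Real.log (2 * T / δ) with hLdef
  set L' : ℝ := Real.log (4 * T / δ) with hL'def
  have hLpos : 0 < L := Real.log_pos (by rw [lt_div_iff₀ hδ0]; nlinarith)
  have hL'pos : 0 < L' := Real.log_pos (by rw [lt_div_iff₀ hδ0]; nlinarith)
  -- the martingale differences
  set D : ℕ → Ω → ℝ :=
    fun j ω => (μ[(fun ω' => (a j ω') ^ 2) | F (j - 1)]) ω - (a j ω) ^ 2 with hDdef
  -- basic facts
  have hsqmeas : ∀ j, 1 ≤ j → j ≤ T → StronglyMeasurable[F j] (fun ω => (a j ω) ^ 2) :=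
    fun j h1 h2 => ((hameas j h1 h2).pow_const 2).stronglyMeasurable
  have hsqint : ∀ j, 1 ≤ j → j ≤ T → Integrable (fun ω => (a j ω) ^ 2) μ := by
    intro j h1 h2
    refine (integrable_const ((β j) ^ 2)).mono'
      ((hsqmeas j h1 h2).mono (hFle j)).aestronglyMeasurable ?_
    filter_upwards [habd j h1 h2] with ω hω
    rw [Real.norm_eq_abs, abs_of_nonneg (sq_nonneg _), ← sq_abs]
    exact pow_le_pow_left₀ (abs_nonneg _) hω 2
  have hsqbd : ∀ j, 1 ≤ j → j ≤ T → ∀ᵐ ω ∂μ, (a j ω) ^ 2 ≤ (β j) ^ 2 := by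
    intro j h1 h2
    filter_upwards [habd j h1 h2] with ω hω
    rw [← sq_abs]
    exact pow_le_pow_left₀ (abs_nonneg _) hω 2
  have hgle : ∀ j, 1 ≤ j → j ≤ T →
      μ[(fun ω' => (a j ω') ^ 2) | F (j - 1)] ≤ᵐ[μ] fun _ => (β j) ^ 2 := by
    intro j h1 h2
    have h := condExp_mono (m := F (j - 1)) (hsqint j h1 h2)
      (integrable_const ((β j) ^ 2)) (hsqbd j h1 h2)
    rwa [condExp_const (hFle (j - 1))] at h
  have hgnn : ∀ j, (0 : Ω → ℝ) ≤ᵐ[μ] μ[(fun ω' => (a j ω') ^ 2) | F (j - 1)] :=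
    fun j => condExp_nonneg (ae_of_all _ fun ω => sq_nonneg _)
  have hDmeas : ∀ j, 1 ≤ j → j ≤ T → StronglyMeasurable[F j] (D j) := by
    intro j h1 h2
    exact (stronglyMeasurable_condExp.mono (hFmono (Nat.sub_le j 1))).sub (hsqmeas j h1 h2)
  have hDbd : ∀ j, 1 ≤ j → j ≤ T → ∀ᵐ ω ∂μ, |D j ω| ≤ (β j) ^ 2 := by
    intro j h1 h2
    filter_upwards [hsqbd j h1 h2, hgle j h1 h2, hgnn j] with ω h3 h4 h5
    have h6 : 0 ≤ (a j ω) ^ 2 := sq_nonneg _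
    simp only [Pi.zero_apply] at h5
    rw [abs_le]
    constructor <;> simp only [hDdef] <;> [linarith; linarith]
  have hDcond : ∀ j, 1 ≤ j → j ≤ T → μ[D j | F (j - 1)] =ᵐ[μ] 0 := by
    intro j h1 h2
    have hsub : μ[D j | F (j - 1)] =ᵐ[μ]
        μ[μ[(fun ω' => (a j ω') ^ 2) | F (j - 1)] | F (j - 1)]
          - μ[(fun ω' => (a j ω') ^ 2) | F (j - 1)] := by
      have heq : D j = μ[(fun ω' => (a j ω') ^ 2) | F (j - 1)] - (fun ω => (a j ω) ^ 2) := rfl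
      rw [heq]
      exact condExp_sub integrable_condExp (hsqint j h1 h2) _
    have hgj : μ[μ[(fun ω' => (a j ω') ^ 2) | F (j - 1)] | F (j - 1)]
        = μ[(fun ω' => (a j ω') ^ 2) | F (j - 1)] :=
      condExp_of_stronglyMeasurable (hFle _) stronglyMeasurable_condExp integrable_condExp
    rw [hgj] at hsub
    filter_upwards [hsub] with ω hω
    simp only [Pi.sub_apply, sub_self, Pi.zero_apply] at *
    exact hω
  -- the deviation levels
  set V : ℕ → ℝ := fun t => ∑ j ∈ Finset.Icc 1 t, (β j) ^ 4 with hVdef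
  set lam : ℕ → ℝ := fun t => Real.sqrt 2 * Real.sqrt (V t * L') with hlamdef
  have hVpos : ∀ t, 1 ≤ t → t ≤ T → 0 < V t := by
    intro t h1 h2
    refine Finset.sum_pos (fun j hj => ?_) ⟨1, Finset.mem_Icc.2 ⟨le_rfl, h1⟩⟩
    rw [Finset.mem_Icc] at hj
    exact pow_pos (hβpos j hj.1 (hj.2.trans h2)) 4
  have hlampos : ∀ t, 1 ≤ t → t ≤ T → 0 < lam t := by
    intro t h1 h2
    exact mul_pos (Real.sqrt_pos.2 (by norm_num))
      (Real.sqrt_pos.2 (mul_pos (hVpos t h1 h2) hL'pos))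
  -- bound for the Azuma bad events
  have hbad2 : ∀ t, 1 ≤ t → t ≤ T →
      μ {ω | lam t ≤ ∑ j ∈ Finset.Icc 1 t, D j ω} ≤ ENNReal.ofReal (δ / (2 * T)) := by
    intro t h1 h2
    have haz := aux_azuma_tail μ F hFmono hFle D (fun j => (β j) ^ 2) t h1
      (fun j hj1 hj2 => pow_pos (hβpos j hj1 (hj2.trans h2)) 2)
      (fun j hj1 hj2 => hDmeas j hj1 (hj2.trans h2))
      (fun j hj1 hj2 => hDbd j hj1 (hj2.trans h2))
      (fun j hj1 hj2 => hDcond j hj1 (hj2.trans h2))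
      (lam t) (hlampos t h1 h2)
    refine haz.trans (ENNReal.ofReal_le_ofReal ?_)
    have hVb : ∑ j ∈ Finset.Icc 1 t, ((β j) ^ 2) ^ 2 = V t :=
      Finset.sum_congr rfl (fun j _ => by ring)
    rw [hVb]
    have hVt := hVpos t h1 h2
    have hlamsq : lam t ^ 2 = 2 * (V t * L') := by
      rw [hlamdef]
      rw [mul_pow, Real.sq_sqrt (by norm_num : (0:ℝ) ≤ 2),
        Real.sq_sqrt (mul_nonneg hVt.le hL'pos.le)]
    rw [hlamsq]
    have harg : 2 * (V t * L') / (2 * V t) = L' := by field_simp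
    rw [harg, hL'def, Real.exp_neg, Real.exp_log h4T, inv_div]
    rw [div_le_div_iff₀ (by positivity) (by positivity)]
    nlinarith
  -- bound for the norm bad events
  have hbad1 : ∀ j, 1 ≤ j → j ≤ T →
      μ {ω | α₂ * d / 2 ≤ |euclNorm (x j ω) ^ 2 - α₂ * d|}
        ≤ ENNReal.ofReal (δ / (2 * T)) := by
    intro j h1 h2
    have hγ : (0 : ℝ) < α₂ * d / 2 := by positivity
    refine (hconc j h1 h2 _ hγ).trans (ENNReal.ofReal_le_ofReal ?_)
    have hA : 16 * K₂ ^ 4 / α₂ ^ 2 * L ≤ d :=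
      le_trans (mul_le_mul_of_nonneg_right (le_max_left _ _) hLpos.le) hdim
    have hB : 4 * K₂ ^ 2 / α₂ * L ≤ d :=
      le_trans (mul_le_mul_of_nonneg_right (le_max_right _ _) hLpos.le) hdim
    have hA' : 16 * K₂ ^ 4 * L ≤ α₂ ^ 2 * d := by
      rw [div_mul_eq_mul_div, div_le_iff₀ (by positivity)] at hA
      linarith
    have hB' : 4 * K₂ ^ 2 * L ≤ α₂ * d := by
      rw [div_mul_eq_mul_div, div_le_iff₀ hα] at hB
      linarith
    have hm1 : 2 * L ≤ (α₂ * d / 2) ^ 2 / (K₂ ^ 4 * d) := by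
      rw [le_div_iff₀ (by positivity)]
      nlinarith [mul_le_mul_of_nonneg_right hA' hdpos.le]
    have hm2 : 2 * L ≤ (α₂ * d / 2) / K₂ ^ 2 := by
      rw [le_div_iff₀ (by positivity)]
      linarith
    have hmin : 2 * L ≤ min ((α₂ * d / 2) ^ 2 / (K₂ ^ 4 * d)) ((α₂ * d / 2) / K₂ ^ 2) :=
      le_min hm1 hm2
    have hexp : Real.exp (-(min ((α₂ * d / 2) ^ 2 / (K₂ ^ 4 * d)) ((α₂ * d / 2) / K₂ ^ 2)))
        ≤ Real.exp (-(2 * L)) := Real.exp_le_exp.2 (by linarith)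
    have hexp2 : Real.exp (-(2 * L)) = (δ / (2 * T)) ^ 2 := by
      rw [show -(2 * L) = -L + -L by ring, Real.exp_add, Real.exp_neg, hLdef,
        Real.exp_log h2T, inv_div]
      ring
    have hy : δ / (2 * T) ≤ 1 / 2 := by
      rw [div_le_div_iff₀ (by positivity) (by norm_num)]
      linarith
    have hynn : 0 ≤ δ / (2 * T) := by positivity
    calc 2 * Real.exp (-(min ((α₂ * d / 2) ^ 2 / (K₂ ^ 4 * d)) ((α₂ * d / 2) / K₂ ^ 2)))
        ≤ 2 * Real.exp (-(2 * L)) := by linarith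
      _ = 2 * (δ / (2 * T)) ^ 2 := by rw [hexp2]
      _ ≤ δ / (2 * T) := by
          have h2y : 2 * (δ / (2 * T)) ≤ 1 := by linarith
          calc 2 * (δ / (2 * T)) ^ 2 = (2 * (δ / (2 * T))) * (δ / (2 * T)) := by ring
            _ ≤ 1 * (δ / (2 * T)) := mul_le_mul_of_nonneg_right h2y hynn
            _ = δ / (2 * T) := one_mul _
  -- the bad set
  set bad : Set Ω :=
    (⋃ j ∈ Finset.Icc 1 T, {ω | α₂ * d / 2 ≤ |euclNorm (x j ω) ^ 2 - α₂ * d|}) ∪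
    (⋃ t ∈ Finset.Icc 1 T, {ω | lam t ≤ ∑ j ∈ Finset.Icc 1 t, D j ω}) with hbaddef
  have hTsmul : ∀ r : ℝ, 0 ≤ r →
      (∑ _j ∈ Finset.Icc 1 T, ENNReal.ofReal r) = ENNReal.ofReal (T * r) := by
    intro r hr
    rw [Finset.sum_const, Nat.card_Icc]
    simp only [Nat.add_sub_cancel, nsmul_eq_mul]
    rw [← ENNReal.ofReal_natCast T, ← ENNReal.ofReal_mul (by positivity)]
  have hbadμ : μ bad ≤ ENNReal.ofReal δ := by
    refine (measure_union_le _ _).trans ?_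
    have hb1 : μ (⋃ j ∈ Finset.Icc 1 T, {ω | α₂ * d / 2 ≤ |euclNorm (x j ω) ^ 2 - α₂ * d|})
        ≤ ENNReal.ofReal (T * (δ / (2 * T))) := by
      refine (measure_biUnion_finset_le _ _).trans ?_
      rw [← hTsmul _ (by positivity)]
      refine Finset.sum_le_sum (fun j hj => ?_)
      rw [Finset.mem_Icc] at hj
      exact hbad1 j hj.1 hj.2
    have hb2 : μ (⋃ t ∈ Finset.Icc 1 T, {ω | lam t ≤ ∑ j ∈ Finset.Icc 1 t, D j ω})
        ≤ ENNReal.ofReal (T * (δ / (2 * T))) := by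
      refine (measure_biUnion_finset_le _ _).trans ?_
      rw [← hTsmul _ (by positivity)]
      refine Finset.sum_le_sum (fun t htmem => ?_)
      rw [Finset.mem_Icc] at htmem
      exact hbad2 t htmem.1 htmem.2
    have heq : (T : ℝ) * (δ / (2 * T)) = δ / 2 := by
      field_simp
    rw [heq] at hb1 hb2
    calc _ ≤ ENNReal.ofReal (δ / 2) + ENNReal.ofReal (δ / 2) := add_le_add hb1 hb2
      _ = ENNReal.ofReal δ := by
          rw [← ENNReal.ofReal_add (by positivity) (by positivity)]
          norm_num
  -- the good set contains the complement of bad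
  set good : Set Ω := {ω | ∀ t ∈ Finset.Icc 1 T,
      α₂ * d / 2 *
        ((∑ j ∈ Finset.Icc 1 t, (μ[(fun ω' => (a j ω') ^ 2) | F (j - 1)]) ω)
          - Real.sqrt 2 * Real.sqrt ((∑ j ∈ Finset.Icc 1 t, β j ^ 4) * Real.log (4 * T / δ)))
      ≤ ∑ j ∈ Finset.Icc 1 t, (a j ω) ^ 2 * euclNorm (x j ω) ^ 2} with hgooddef
  have hsub : badᶜ ⊆ good := by
    intro ω hω
    simp only [hbaddef, Set.mem_compl_iff, Set.mem_union, Set.mem_iUnion, Set.mem_setOf_eq,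
      not_or, not_exists, not_le] at hω
    obtain ⟨hω1, hω2⟩ := hω
    intro t htmem
    rw [Finset.mem_Icc] at htmem
    have hx2 : ∀ j ∈ Finset.Icc 1 t, α₂ * d / 2 ≤ euclNorm (x j ω) ^ 2 := by
      intro j hj
      rw [Finset.mem_Icc] at hj
      have := hω1 j (Finset.mem_Icc.2 ⟨hj.1, hj.2.trans htmem.2⟩)
      have habs := abs_lt.1 this
      linarith [habs.1]
    have hsum1 : (∑ j ∈ Finset.Icc 1 t, (μ[(fun ω' => (a j ω') ^ 2) | F (j - 1)]) ω)
        - lam t ≤ ∑ j ∈ Finset.Icc 1 t, (a j ω) ^ 2 := by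
      have h := hω2 t (Finset.mem_Icc.2 htmem)
      have hsplit : (∑ j ∈ Finset.Icc 1 t, D j ω)
          = (∑ j ∈ Finset.Icc 1 t, (μ[(fun ω' => (a j ω') ^ 2) | F (j - 1)]) ω)
            - ∑ j ∈ Finset.Icc 1 t, (a j ω) ^ 2 := by
        rw [← Finset.sum_sub_distrib]
      rw [hsplit] at h
      linarith
    have hlamval : lam t
        = Real.sqrt 2 * Real.sqrt ((∑ j ∈ Finset.Icc 1 t, β j ^ 4) * Real.log (4 * T / δ)) := by
      rw [hlamdef]
    calc α₂ * d / 2 *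
        ((∑ j ∈ Finset.Icc 1 t, (μ[(fun ω' => (a j ω') ^ 2) | F (j - 1)]) ω)
          - Real.sqrt 2 * Real.sqrt ((∑ j ∈ Finset.Icc 1 t, β j ^ 4) * Real.log (4 * T / δ)))
        ≤ α₂ * d / 2 * ∑ j ∈ Finset.Icc 1 t, (a j ω) ^ 2 := by
          refine mul_le_mul_of_nonneg_left ?_ (by positivity)
          rw [← hlamval]
          exact hsum1
      _ = ∑ j ∈ Finset.Icc 1 t, α₂ * d / 2 * (a j ω) ^ 2 := Finset.mul_sum _ _ _
      _ ≤ ∑ j ∈ Finset.Icc 1 t, (a j ω) ^ 2 * euclNorm (x j ω) ^ 2 := by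
          refine Finset.sum_le_sum (fun j hj => ?_)
          rw [mul_comm (α₂ * ↑d / 2)]
          exact mul_le_mul_of_nonneg_left (hx2 j hj) (sq_nonneg _)
  -- conclude
  have h1le : (1 : ENNReal) ≤ μ good + ENNReal.ofReal δ := by
    have huniv : (1 : ENNReal) = μ Set.univ := (measure_univ (μ := μ)).symm
    have hsplit : (Set.univ : Set Ω) = badᶜ ∪ bad := (Set.compl_union_self bad).symm
    calc (1 : ENNReal) = μ Set.univ := huniv
      _ = μ (badᶜ ∪ bad) := by rw [← hsplit]
      _ ≤ μ badᶜ + μ bad := measure_union_le _ _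
      _ ≤ μ good + ENNReal.ofReal δ := add_le_add (measure_mono hsub) hbadμ
  have hkey : ENNReal.ofReal (1 - δ) + ENNReal.ofReal δ ≤ μ good + ENNReal.ofReal δ := by
    rw [← ENNReal.ofReal_add (by linarith) hδ0.le]
    simp only [sub_add_cancel]
    calc ENNReal.ofReal 1 = 1 := by norm_num
      _ ≤ _ := h1le
  exact (ENNReal.add_le_add_iff_right ENNReal.ofReal_ne_top).1 hkey

end
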